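/- Let T be an n×n upper-triangular complex matrix with positive diagonal, written T = √(T_d) + T_u with T_d = diag(t_{11},...,t_{nn}) and T_u strictly upper triangular, and suppose T_d = c·I_n + T̃_d for a constant c > 0 and a small diagonal perturbation T̃_d. Then (T·T*)_{ij} = √c·(T_u)_{ij} + E_{ij} for all i < j, where |E_{ij}| ≤ C·(‖T_u‖² + ‖T_u‖·‖T̃_d‖) for a constant C depending only on c and n, provided ‖T̃_d‖ ≤ c/2 (‖·‖ is the Hilbert–Schmidt norm). -/

import Mathlib

open Finset Matrix

set_option maxHeartbeats 1000000 in
/-- first-order expansion of the off-diagonal entries of `T T*` for an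
upper-triangular `T = √(c·I + T̃_d) + T_u`: there is a constant `C` depending only on
`c` and `n` such that, whenever `‖T̃_d‖ ≤ c/2`, for all `i < j`,
`|(T T*)_{ij} − √c (T_u)_{ij}| ≤ C (‖T_u‖² + ‖T_u‖ ‖T̃_d‖)` (Hilbert–Schmidt norms). -/
theorem stmt16 (n : ℕ) (c : ℝ) (hc : 0 < c) :
    ∃ C : ℝ, 0 < C ∧
      ∀ (d : Fin n → ℝ) (Tu : Matrix (Fin n) (Fin n) ℂ),
        (∀ i j : Fin n, ¬ i < j → Tu i j = 0) →
        Real.sqrt (∑ i, d i ^ 2) ≤ c / 2 →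
        ∀ i j : Fin n, i < j →
          Norm.norm
            ((((Matrix.diagonal fun k => ((Real.sqrt (c + d k) : ℝ) : ℂ)) + Tu) *
              ((Matrix.diagonal fun k => ((Real.sqrt (c + d k) : ℝ) : ℂ)) + Tu)ᴴ) i j
              - ((Real.sqrt c : ℝ) : ℂ) * Tu i j)
          ≤ C * (Real.sqrt (∑ k, ∑ l, Norm.norm (Tu k l) ^ 2) ^ 2 +
              Real.sqrt (∑ k, ∑ l, Norm.norm (Tu k l) ^ 2) *
                Real.sqrt (∑ k, d k ^ 2)) := by
  have hsc : 0 < Real.sqrt c := Real.sqrt_pos.mpr hc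
  refine ⟨1 + (Real.sqrt c)⁻¹, by positivity, ?_⟩
  intro d Tu hTu hd i j hij
  set S : ℝ := Real.sqrt (∑ k, ∑ l, Norm.norm (Tu k l) ^ 2) with hSdef
  set Dn : ℝ := Real.sqrt (∑ k, d k ^ 2) with hDdef
  have hS0 : 0 ≤ S := Real.sqrt_nonneg _
  have hD0 : 0 ≤ Dn := Real.sqrt_nonneg _
  -- entry computation
  set A : Matrix (Fin n) (Fin n) ℂ := Matrix.diagonal fun k => ((Real.sqrt (c + d k) : ℝ) : ℂ)
    with hA
  have hexp : (A + Tu) * (A + Tu)ᴴ = A * Aᴴ + A * Tuᴴ + Tu * Aᴴ + Tu * Tuᴴ := by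
    rw [Matrix.conjTranspose_add]; noncomm_ring
  have h1 : (A * Aᴴ) i j = 0 := by
    rw [hA, Matrix.diagonal_conjTranspose, Matrix.diagonal_mul_diagonal,
      Matrix.diagonal_apply_ne _ hij.ne]
  have h2 : (A * Tuᴴ) i j = 0 := by
    rw [hA, Matrix.diagonal_mul, Matrix.conjTranspose_apply, hTu j i hij.asymm, star_zero,
      mul_zero]
  have h3 : (Tu * Aᴴ) i j = Tu i j * ((Real.sqrt (c + d j) : ℝ) : ℂ) := by
    rw [hA, Matrix.diagonal_conjTranspose, Matrix.mul_diagonal]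
    simp [Complex.conj_ofReal]
  have h4 : (Tu * Tuᴴ) i j = ∑ k, Tu i k * star (Tu j k) := by
    simp [Matrix.mul_apply, Matrix.conjTranspose_apply]
  have hval : ((A + Tu) * (A + Tu)ᴴ) i j - ((Real.sqrt c : ℝ) : ℂ) * Tu i j
      = Tu i j * (((Real.sqrt (c + d j) : ℝ) : ℂ) - ((Real.sqrt c : ℝ) : ℂ))
        + ∑ k, Tu i k * star (Tu j k) := by
    rw [hexp, Matrix.add_apply, Matrix.add_apply, Matrix.add_apply, h1, h2, h3, h4]
    ring
  rw [hval]
  -- basic bounds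
  have hdk : ∀ k, |d k| ≤ Dn := by
    intro k
    rw [hDdef, ← Real.sqrt_sq_eq_abs]
    exact Real.sqrt_le_sqrt (Finset.single_le_sum (f := fun l => d l ^ 2)
      (fun l _ => sq_nonneg (d l)) (mem_univ k))
  have hrow : ∀ k, Real.sqrt (∑ l, Norm.norm (Tu k l) ^ 2) ≤ S := by
    intro k
    exact Real.sqrt_le_sqrt (Finset.single_le_sum
      (f := fun k' => ∑ l', Norm.norm (Tu k' l') ^ 2)
      (fun k' _ => Finset.sum_nonneg fun l' _ => sq_nonneg _) (mem_univ k))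
  have habsTu : ∀ k l, Norm.norm (Tu k l) ≤ S := by
    intro k l
    refine le_trans ?_ (hrow k)
    rw [← Real.sqrt_sq (norm_nonneg (Tu k l))]
    exact Real.sqrt_le_sqrt (Finset.single_le_sum (f := fun l' => Norm.norm (Tu k l') ^ 2)
      (fun l' _ => sq_nonneg _) (mem_univ l))
  -- bound on the sqrt difference
  have hdj : c + d j ≥ c / 2 := by
    have := (abs_le.mp ((hdk j).trans hd)).1
    linarith
  have hcd0 : 0 ≤ c + d j := le_trans (by linarith) hdj
  have hdiff : |Real.sqrt (c + d j) - Real.sqrt c| ≤ |d j| / Real.sqrt c := by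
    have hprod : (Real.sqrt (c + d j) - Real.sqrt c) * (Real.sqrt (c + d j) + Real.sqrt c)
        = d j := by
      have h1 := Real.sq_sqrt hcd0
      have h2 := Real.sq_sqrt hc.le
      nlinarith
    have hden : Real.sqrt c ≤ Real.sqrt (c + d j) + Real.sqrt c := by
      have := Real.sqrt_nonneg (c + d j); linarith
    have hpos : 0 < Real.sqrt (c + d j) + Real.sqrt c := lt_of_lt_of_le hsc hden
    rw [le_div_iff₀ hsc]
    calc |Real.sqrt (c + d j) - Real.sqrt c| * Real.sqrt c
        ≤ |Real.sqrt (c + d j) - Real.sqrt c| * (Real.sqrt (c + d j) + Real.sqrt c) :=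
          mul_le_mul_of_nonneg_left hden (abs_nonneg _)
      _ = |(Real.sqrt (c + d j) - Real.sqrt c) * (Real.sqrt (c + d j) + Real.sqrt c)| := by
          rw [abs_mul, abs_of_pos hpos]
      _ = |d j| := by rw [hprod]
  -- bound the sum term
  have hsum : Norm.norm (∑ k, Tu i k * star (Tu j k)) ≤ S * S := by
    calc Norm.norm (∑ k, Tu i k * star (Tu j k))
        ≤ ∑ k, Norm.norm (Tu i k * star (Tu j k)) := norm_sum_le _ _
      _ = ∑ k, Norm.norm (Tu i k) * Norm.norm (Tu j k) := by
          refine Finset.sum_congr rfl fun k _ => ?_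
          rw [norm_mul]
          congr 1
          exact Complex.norm_conj (Tu j k)
      _ ≤ Real.sqrt (∑ k, Norm.norm (Tu i k) ^ 2) *
            Real.sqrt (∑ k, Norm.norm (Tu j k) ^ 2) := by
          rw [← Real.sqrt_mul (Finset.sum_nonneg fun _ _ => sq_nonneg _)]
          rw [← Real.sqrt_sq (Finset.sum_nonneg fun k _ =>
            mul_nonneg (norm_nonneg _) (norm_nonneg _))]
          exact Real.sqrt_le_sqrt (Finset.sum_mul_sq_le_sq_mul_sq _ _ _)
      _ ≤ S * S := mul_le_mul (hrow i) (hrow j) (Real.sqrt_nonneg _) hS0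
  -- put it together
  calc Norm.norm (Tu i j * (((Real.sqrt (c + d j) : ℝ) : ℂ) - ((Real.sqrt c : ℝ) : ℂ))
          + ∑ k, Tu i k * star (Tu j k))
      ≤ Norm.norm (Tu i j * (((Real.sqrt (c + d j) : ℝ) : ℂ) - ((Real.sqrt c : ℝ) : ℂ)))
        + Norm.norm (∑ k, Tu i k * star (Tu j k)) := norm_add_le _ _
    _ = Norm.norm (Tu i j) * |Real.sqrt (c + d j) - Real.sqrt c|
        + Norm.norm (∑ k, Tu i k * star (Tu j k)) := by
          rw [norm_mul, ← Complex.ofReal_sub, Complex.norm_real, Real.norm_eq_abs]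
    _ ≤ S * (|d j| / Real.sqrt c) + S * S :=
        add_le_add (mul_le_mul (habsTu i j) hdiff (abs_nonneg _) hS0) hsum
    _ ≤ S * (Dn / Real.sqrt c) + S * S :=
        add_le_add_left (mul_le_mul_of_nonneg_left
          ((div_le_div_iff_of_pos_right hsc).mpr (hdk j)) hS0) _
    _ ≤ (1 + (Real.sqrt c)⁻¹) * (S ^ 2 + S * Dn) := by
        rw [div_eq_mul_inv]
        have h1 : 0 ≤ S * Dn := mul_nonneg hS0 hD0
        have h2 : 0 ≤ (Real.sqrt c)⁻¹ := inv_nonneg.2 hsc.le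
        nlinarith [mul_nonneg (mul_nonneg hS0 hS0) h2]
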